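/- D(G_2(q)) = (E_2(q)·G_2(q) − 2·G_2(q)² + E_4(q))/6 in ℚ⟦q⟧. -/

import Mathlib

open PowerSeries Finset

noncomputable section

/-- The operator `D = q·d/dq` on `ℚ⟦q⟧`, coefficientwise `aₙ ↦ n·aₙ`. -/
def Dq (F : ℚ⟦X⟧) : ℚ⟦X⟧ := PowerSeries.mk fun n => (n : ℚ) * coeff n F

/-- `E₂(q) = 1 - 24 Σ_{n≥1} σ₁(n) qⁿ`. -/
def E2 : ℚ⟦X⟧ := PowerSeries.mk fun n => if n = 0 then 1 else -24 * ∑ d ∈ n.divisors, (d : ℚ)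

/-- `E₄(q) = 1 + 240 Σ_{n≥1} σ₃(n) qⁿ`. -/
def E4 : ℚ⟦X⟧ := PowerSeries.mk fun n => if n = 0 then 1 else 240 * ∑ d ∈ n.divisors, (d : ℚ) ^ 3

/-- `E₆(q) = 1 - 504 Σ_{n≥1} σ₅(n) qⁿ`. -/
def E6 : ℚ⟦X⟧ := PowerSeries.mk fun n => if n = 0 then 1 else -504 * ∑ d ∈ n.divisors, (d : ℚ) ^ 5

/-- `∏_{k≥1} (1 - qᵏ)`, defined coefficientwise by truncated finite products
(factors with `k > N` do not affect the `N`-th coefficient). -/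
def eulerProd : ℚ⟦X⟧ :=
  PowerSeries.mk fun N => coeff N (∏ k ∈ Finset.Icc 1 N, (1 - X ^ k : ℚ⟦X⟧))

/-- `Σ_{n ∈ ℤ} (-1)ⁿ (6n+1)^{2t} q^{n(3n+1)/2}` (any `n` with `n(3n+1)/2 = N`
satisfies `|n| ≤ N`). -/
def pentagonalSum (t : ℕ) : ℚ⟦X⟧ := PowerSeries.mk fun N =>
  ∑ n ∈ Finset.Icc (-(N : ℤ)) (N : ℤ),
    if n * (3 * n + 1) = 2 * N then (-1 : ℚ) ^ n * ((6 * n + 1 : ℤ) : ℚ) ^ (2 * t) else 0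

/-- `θ₂(q)⁴ = 16 q (Σ_{n≥0} q^{n(n+1)})⁴`. -/
def theta2four : ℚ⟦X⟧ :=
  16 * X * (PowerSeries.mk fun N => ∑ n ∈ Finset.range (N + 1),
    if n * (n + 1) = N then (1 : ℚ) else 0) ^ 4

/-- `θ₃(q) = 1 + 2 Σ_{n≥1} q^{n²}`. -/
def theta3 : ℚ⟦X⟧ :=
  1 + 2 * PowerSeries.mk fun N => ∑ n ∈ Finset.Icc 1 N, if n ^ 2 = N then (1 : ℚ) else 0

/-- `θ₄(q) = 1 + 2 Σ_{n≥1} (-1)ⁿ q^{n²}`. -/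
def theta4 : ℚ⟦X⟧ :=
  1 + 2 * PowerSeries.mk fun N => ∑ n ∈ Finset.Icc 1 N, if n ^ 2 = N then (-1 : ℚ) ^ n else 0

/-- `Θ_{r,s} = θ₂^{4r} θ₃^{4s} + θ₂^{4s} θ₃^{4r}`. -/
def Theta (r s : ℕ) : ℚ⟦X⟧ :=
  theta2four ^ r * theta3 ^ (4 * s) + theta2four ^ s * theta3 ^ (4 * r)

/-- MacMahon's `C_{2t}(q) = Σ_{0<s₁<⋯<s_t} q^{Σ(2sᵢ-1)} ∏ (1-q^{2sᵢ-1})⁻²`,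
defined coefficientwise: tuples with some `sᵢ > N+1` do not affect the `N`-th coefficient. -/
def Cmac (t : ℕ) : ℚ⟦X⟧ := PowerSeries.mk fun N =>
  coeff N (∑ S ∈ (Finset.Icc 1 (N + 1)).powersetCard t,
    ∏ s ∈ S, (X ^ (2 * s - 1) * ((1 - X ^ (2 * s - 1) : ℚ⟦X⟧)⁻¹) ^ 2))

/-- MacMahon's `U_{2t}(q) = Σ_{0<k₁<⋯<k_t} q^{Σkᵢ} ∏ (1-q^{kᵢ})⁻²`,
defined coefficientwise by truncation. -/
def Umac (t : ℕ) : ℚ⟦X⟧ := PowerSeries.mk fun N =>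
  coeff N (∑ S ∈ (Finset.Icc 1 (N + 1)).powersetCard t,
    ∏ k ∈ S, (X ^ k * ((1 - X ^ k : ℚ⟦X⟧)⁻¹) ^ 2))

/-- `U*_{2t}(q) = Σ_{0<k₁≤⋯≤k_t} q^{Σkᵢ} ∏ (1-q^{kᵢ})⁻²`, a sum over multisets of
size `t`, defined coefficientwise by truncation. -/
def UmacStar (t : ℕ) : ℚ⟦X⟧ := PowerSeries.mk fun N =>
  coeff N (∑ m ∈ (Finset.Icc 1 (N + 1)).sym t,
    ((m : Multiset ℕ).map fun k => X ^ k * ((1 - X ^ k : ℚ⟦X⟧)⁻¹) ^ 2).prod)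

/-- `E₂(q²)`, the substitution `q ↦ q²` in `E₂`. -/
def E2sq : ℚ⟦X⟧ := PowerSeries.mk fun n => if 2 ∣ n then coeff (n / 2) E2 else 0

/-- `G₂(q) = 2 E₂(q²) - E₂(q)`. -/
def G2 : ℚ⟦X⟧ := 2 * E2sq - E2

namespace DG2aux



def S4 (n : ℕ) : Finset (ℕ × ℕ × ℕ × ℕ) :=
  (Finset.Icc 1 n ×ˢ Finset.Icc 1 n ×ˢ Finset.Icc 1 n ×ˢ Finset.Icc 1 n).filter
    (fun q => q.1 * q.2.2.1 + q.2.1 * q.2.2.2 = n)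

lemma mem_S4 {n a b x y : ℕ} :
    (a, b, x, y) ∈ S4 n ↔ 0 < a ∧ 0 < b ∧ 0 < x ∧ 0 < y ∧ a * x + b * y = n := by
  simp only [S4, Finset.mem_filter, Finset.mem_product, Finset.mem_Icc]
  constructor
  · rintro ⟨⟨⟨ha, _⟩, ⟨hb, _⟩, ⟨hx, _⟩, ⟨hy, _⟩⟩, he⟩
    exact ⟨ha, hb, hx, hy, he⟩
  · rintro ⟨ha, hb, hx, hy, he⟩
    refine ⟨⟨⟨ha, ?_⟩, ⟨hb, ?_⟩, ⟨hx, ?_⟩, ⟨hy, ?_⟩⟩, he⟩ <;> nlinarith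

lemma bij1 (n : ℕ) (F : ℕ → ℕ → ℕ → ℕ → ℚ) :
    ∑ q ∈ (S4 n).filter (fun q => q.2.2.2 < q.2.2.1), F q.1 q.2.1 q.2.2.1 q.2.2.2
      = ∑ q ∈ (S4 n).filter (fun q => q.1 < q.2.1), F q.1 (q.2.1 - q.1) (q.2.2.1 + q.2.2.2) q.2.2.2 := by
  apply Finset.sum_nbij' (fun q => (q.1, q.1 + q.2.1, q.2.2.1 - q.2.2.2, q.2.2.2))
    (fun q => (q.1, q.2.1 - q.1, q.2.2.1 + q.2.2.2, q.2.2.2))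
  · rintro ⟨a, b, x, y⟩ h
    simp only [Finset.mem_filter, mem_S4] at h ⊢
    obtain ⟨⟨ha, hb, hx, hy, he⟩, hlt⟩ := h
    refine ⟨⟨ha, by omega, by omega, hy, ?_⟩, by omega⟩
    have he' : (a:ℤ) * x + b * y = n := by exact_mod_cast he
    have h2 : (a:ℤ) * ((x:ℤ) - y) + ((a:ℤ) + b) * y = n := by linear_combination he'
    have h3 : ((x - y : ℕ) : ℤ) = (x:ℤ) - y := by omega
    exact_mod_cast h3 ▸ h2
  · rintro ⟨a, b, x, y⟩ h
    simp only [Finset.mem_filter, mem_S4] at h ⊢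
    obtain ⟨⟨ha, hb, hx, hy, he⟩, hlt⟩ := h
    refine ⟨⟨ha, by omega, by omega, hy, ?_⟩, by omega⟩
    have he' : (a:ℤ) * x + b * y = n := by exact_mod_cast he
    have h2 : (a:ℤ) * ((x:ℤ) + y) + ((b:ℤ) - a) * y = n := by linear_combination he'
    have h3 : ((b - a : ℕ) : ℤ) = (b:ℤ) - a := by omega
    push_cast
    exact_mod_cast h3 ▸ h2
  · rintro ⟨a, b, x, y⟩ h
    simp only [Finset.mem_filter, mem_S4] at h
    simp only [Prod.mk.injEq]
    and_intros <;> first | trivial | omega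
  · rintro ⟨a, b, x, y⟩ h
    simp only [Finset.mem_filter, mem_S4] at h
    simp only [Prod.mk.injEq]
    and_intros <;> first | trivial | omega
  · rintro ⟨a, b, x, y⟩ h
    simp only [Finset.mem_filter, mem_S4] at h
    have h1 : a + b - a = b := by omega
    have h2 : x - y + y = x := by omega
    simp only [h1, h2]
  done

lemma bij2 (n : ℕ) (F : ℕ → ℕ → ℕ → ℕ → ℚ) :
    ∑ q ∈ (S4 n).filter (fun q => q.2.2.1 < q.2.2.2), F q.1 q.2.1 q.2.2.1 q.2.2.2
      = ∑ q ∈ (S4 n).filter (fun q => q.2.1 < q.1), F (q.1 - q.2.1) q.2.1 q.2.2.1 (q.2.2.1 + q.2.2.2) := by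
  apply Finset.sum_nbij' (fun q => (q.1 + q.2.1, q.2.1, q.2.2.1, q.2.2.2 - q.2.2.1))
    (fun q => (q.1 - q.2.1, q.2.1, q.2.2.1, q.2.2.1 + q.2.2.2))
  · rintro ⟨a, b, x, y⟩ h
    simp only [Finset.mem_filter, mem_S4] at h ⊢
    obtain ⟨⟨ha, hb, hx, hy, he⟩, hlt⟩ := h
    refine ⟨⟨by omega, hb, hx, by omega, ?_⟩, by omega⟩
    have he' : (a:ℤ) * x + b * y = n := by exact_mod_cast he
    have h2 : ((a:ℤ) + b) * x + (b:ℤ) * ((y:ℤ) - x) = n := by linear_combination he'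
    have h3 : ((y - x : ℕ) : ℤ) = (y:ℤ) - x := by omega
    push_cast
    exact_mod_cast h3 ▸ h2
  · rintro ⟨a, b, x, y⟩ h
    simp only [Finset.mem_filter, mem_S4] at h ⊢
    obtain ⟨⟨ha, hb, hx, hy, he⟩, hlt⟩ := h
    refine ⟨⟨by omega, hb, hx, by omega, ?_⟩, by omega⟩
    have he' : (a:ℤ) * x + b * y = n := by exact_mod_cast he
    have h2 : ((a:ℤ) - b) * x + (b:ℤ) * ((x:ℤ) + y) = n := by linear_combination he'
    have h3 : ((a - b : ℕ) : ℤ) = (a:ℤ) - b := by omega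
    push_cast
    exact_mod_cast h3 ▸ h2
  · rintro ⟨a, b, x, y⟩ h
    simp only [Finset.mem_filter, mem_S4] at h
    simp only [Prod.mk.injEq]
    and_intros <;> first | trivial | omega
  · rintro ⟨a, b, x, y⟩ h
    simp only [Finset.mem_filter, mem_S4] at h
    simp only [Prod.mk.injEq]
    and_intros <;> first | trivial | omega
  · rintro ⟨a, b, x, y⟩ h
    simp only [Finset.mem_filter, mem_S4] at h
    have h1 : a + b - b = a := by omega
    have h2 : x + (y - x) = y := by omega
    simp only [h1, h2]
  done

lemma bij3 (n : ℕ) (F : ℕ → ℕ → ℕ → ℕ → ℚ) :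
    ∑ q ∈ (S4 n).filter (fun q => q.2.2.1 = q.2.2.2), F q.1 q.2.1 q.2.2.1 q.2.2.2
      = ∑ p ∈ n.divisorsAntidiagonal, ∑ c ∈ Finset.Ico 1 p.1, F c (p.1 - c) p.2 p.2 := by
  rw [Finset.sum_sigma']
  apply Finset.sum_nbij' (fun q => (⟨(q.1 + q.2.1, q.2.2.1), q.1⟩ : Σ _ : ℕ × ℕ, ℕ))
    (fun s => (s.2, s.1.1 - s.2, s.1.2, s.1.2))
  · rintro ⟨a, b, x, y⟩ h
    simp only [Finset.mem_filter, mem_S4] at h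
    obtain ⟨⟨ha, hb, hx, hy, he⟩, hxy⟩ := h
    simp only [Finset.mem_sigma, Nat.mem_divisorsAntidiagonal, Finset.mem_Ico]
    subst hxy
    have hax : 1 * 1 ≤ a * x := Nat.mul_le_mul ha hx
    refine ⟨⟨by rw [add_mul]; omega, by omega⟩, by omega, by omega⟩
  · rintro ⟨⟨d, e⟩, c⟩ h
    simp only [Finset.mem_sigma, Nat.mem_divisorsAntidiagonal, Finset.mem_Ico] at h
    obtain ⟨⟨hde, hn⟩, hc1, hcd⟩ := h
    simp only [Finset.mem_filter, mem_S4]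
    have he : 0 < e := by
      rcases Nat.eq_zero_or_pos e with rfl | h
      · simp at hde; omega
      · exact h
    refine ⟨⟨by omega, by omega, he, he, ?_⟩, trivial⟩
    have h4 : c * e + (d - c) * e = d * e := by
      rw [← add_mul]; congr 1; omega
    omega
  · rintro ⟨a, b, x, y⟩ h
    simp only [Finset.mem_filter, mem_S4] at h
    simp only [Prod.mk.injEq]
    and_intros <;> first | trivial | omega
  · rintro ⟨⟨d, e⟩, c⟩ h
    simp only [Finset.mem_sigma, Nat.mem_divisorsAntidiagonal, Finset.mem_Ico] at h
    simp only [Sigma.ext_iff, Prod.mk.injEq, heq_eq_eq]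
    and_intros <;> first | trivial | omega
  · rintro ⟨a, b, x, y⟩ h
    simp only [Finset.mem_filter, mem_S4] at h
    have h1 : a + b - a = b := by omega
    simp only [h1]
    have h2 : x = y := h.2
    rw [h2]
  done

/-- The Liouville engine. -/
lemma engine (n : ℕ) (F : ℕ → ℕ → ℕ → ℕ → ℚ) :
    ∑ q ∈ S4 n, F q.1 q.2.1 q.2.2.1 q.2.2.2
      = (∑ q ∈ S4 n, if q.1 < q.2.1 then F q.1 (q.2.1 - q.1) (q.2.2.1 + q.2.2.2) q.2.2.2 else 0)
      + (∑ q ∈ S4 n, if q.2.1 < q.1 then F (q.1 - q.2.1) q.2.1 q.2.2.1 (q.2.2.1 + q.2.2.2) else 0)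
      + ∑ p ∈ n.divisorsAntidiagonal, ∑ c ∈ Finset.Ico 1 p.1, F c (p.1 - c) p.2 p.2 := by
  rw [← Finset.sum_filter, ← Finset.sum_filter, ← bij1, ← bij2, ← bij3]
  have key : ∀ q ∈ S4 n, F q.1 q.2.1 q.2.2.1 q.2.2.2
      = (if q.2.2.2 < q.2.2.1 then F q.1 q.2.1 q.2.2.1 q.2.2.2 else 0)
      + (if q.2.2.1 < q.2.2.2 then F q.1 q.2.1 q.2.2.1 q.2.2.2 else 0)
      + (if q.2.2.1 = q.2.2.2 then F q.1 q.2.1 q.2.2.1 q.2.2.2 else 0) := by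
    intro q _
    rcases lt_trichotomy q.2.2.1 q.2.2.2 with h | h | h <;>
      · split_ifs <;> first | omega | ring
  rw [Finset.sum_congr rfl key]
  rw [Finset.sum_add_distrib, Finset.sum_add_distrib]
  rw [Finset.sum_filter, Finset.sum_filter, Finset.sum_filter]



lemma negpow_sub {a b : ℕ} (h : b ≤ a) : (-1 : ℚ) ^ (a - b) = (-1) ^ (a + b) := by
  have h2 : a - b + 2 * b = a + b := by omega
  calc (-1 : ℚ) ^ (a - b) = (-1) ^ (a - b) * ((-1) ^ 2) ^ b := by norm_num
    _ = (-1) ^ (a - b + 2 * b) := by rw [← pow_mul, ← pow_add]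
    _ = _ := by rw [h2]

lemma inner_one {d : ℕ} (hd : 1 ≤ d) : ∑ _c ∈ Finset.Ico 1 d, (1 : ℚ) = (d : ℚ) - 1 := by
  rw [Finset.sum_const, Nat.card_Ico, nsmul_eq_mul, Nat.cast_sub hd]
  push_cast
  ring

lemma inner_alt {d : ℕ} (hd : 1 ≤ d) :
    ∑ c ∈ Finset.Ico 1 d, (-1 : ℚ) ^ c = if 2 ∣ d then -1 else 0 := by
  induction d, hd using Nat.le_induction with
  | base => simp
  | succ d hd ih =>
    rw [Finset.sum_Ico_succ_top hd, ih]
    rcases Nat.even_or_odd d with h | h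
    · have h1 : 2 ∣ d := h.two_dvd
      have h2 : ¬ 2 ∣ (d + 1) := by omega
      simp [h1, h2, h.neg_one_pow]
    · have h1 : ¬ 2 ∣ d := by rcases h with ⟨k, hk⟩; omega
      have h2 : 2 ∣ (d + 1) := by rcases h with ⟨k, hk⟩; omega
      simp [h1, h2, h.neg_one_pow]

lemma inner_alt' {d : ℕ} (hd : 1 ≤ d) :
    ∑ c ∈ Finset.Ico 1 d, (-1 : ℚ) ^ (d - c) = if 2 ∣ d then -1 else 0 := by
  rw [← inner_alt hd]
  rw [Finset.sum_Ico_eq_sum_range, Finset.sum_Ico_eq_sum_range, ← Finset.sum_range_reflect]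
  apply Finset.sum_congr rfl
  intro i hi
  simp only [Finset.mem_range] at hi
  congr 1
  omega

lemma inner_altd {d : ℕ} (hd : 1 ≤ d) :
    ∑ c ∈ Finset.Ico 1 d, (-1 : ℚ) ^ (c + (d - c)) = ((d : ℚ) - 1) * (-1) ^ d := by
  have key : ∀ c ∈ Finset.Ico 1 d, (-1 : ℚ) ^ (c + (d - c)) = (-1) ^ d := by
    intro c hc
    simp only [Finset.mem_Ico] at hc
    congr 1
    omega
  rw [Finset.sum_congr rfl key, Finset.sum_const, Nat.card_Ico, nsmul_eq_mul,
    Nat.cast_sub hd]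
  push_cast
  ring

lemma sum_c {d : ℕ} : ∑ c ∈ Finset.Ico 1 d, (c : ℚ) = ((d : ℚ) ^ 2 - d) / 2 := by
  induction d with
  | zero => simp
  | succ d ih =>
    rcases Nat.eq_zero_or_pos d with rfl | hd
    · simp
    rw [Finset.sum_Ico_succ_top hd, ih]
    push_cast
    ring

lemma sum_c2 {d : ℕ} :
    ∑ c ∈ Finset.Ico 1 d, (c : ℚ) ^ 2 = (2 * (d : ℚ) ^ 3 - 3 * (d : ℚ) ^ 2 + d) / 6 := by
  induction d with
  | zero => simp
  | succ d ih =>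
    rcases Nat.eq_zero_or_pos d with rfl | hd
    · norm_num
    rw [Finset.sum_Ico_succ_top hd, ih]
    push_cast
    ring

lemma inner_xy {d : ℕ} :
    ∑ c ∈ Finset.Ico 1 d, (c : ℚ) * ((d - c : ℕ) : ℚ) = ((d : ℚ) ^ 3 - d) / 6 := by
  have key : ∀ c ∈ Finset.Ico 1 d, (c : ℚ) * ((d - c : ℕ) : ℚ)
      = (d : ℚ) * (c : ℚ) - (c : ℚ) ^ 2 := by
    intro c hc
    simp only [Finset.mem_Ico] at hc
    rw [Nat.cast_sub hc.2.le]
    ring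
  rw [Finset.sum_congr rfl key, Finset.sum_sub_distrib, ← Finset.mul_sum, sum_c, sum_c2]
  ring

lemma inner_yy {d : ℕ} :
    ∑ c ∈ Finset.Ico 1 d, ((d - c : ℕ) : ℚ) ^ 2
      = (2 * (d : ℚ) ^ 3 - 3 * (d : ℚ) ^ 2 + d) / 6 := by
  rw [← sum_c2]
  rw [Finset.sum_Ico_eq_sum_range, Finset.sum_Ico_eq_sum_range, ← Finset.sum_range_reflect]
  apply Finset.sum_congr rfl
  intro i hi
  simp only [Finset.mem_range] at hi
  congr 2
  omega

lemma swap_dA (n : ℕ) (f : ℕ → ℕ → ℚ) :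
    ∑ p ∈ n.divisorsAntidiagonal, f p.1 p.2 = ∑ p ∈ n.divisorsAntidiagonal, f p.2 p.1 := by
  apply Finset.sum_nbij' (fun p => (p.2, p.1)) (fun p => (p.2, p.1)) <;>
    simp +contextual [Nat.mem_divisorsAntidiagonal, mul_comm]

lemma antisym_dA (n : ℕ) (f : ℕ → ℕ → ℚ)
    (h : ∀ d e : ℕ, d * e = n → f d e + f e d = 0) :
    ∑ p ∈ n.divisorsAntidiagonal, f p.1 p.2 = 0 := by
  have h2 : (2 : ℚ) * ∑ p ∈ n.divisorsAntidiagonal, f p.1 p.2 = 0 := by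
    rw [two_mul]
    nth_rewrite 2 [swap_dA n f]
    rw [← Finset.sum_add_distrib]
    apply Finset.sum_eq_zero
    intro p hp
    simp only [Nat.mem_divisorsAntidiagonal] at hp
    exact h p.1 p.2 hp.1
  linarith

/-- swap (a,b,x,y) ↦ (b,a,y,x). -/
lemma sum_tau (n : ℕ) (F : ℕ → ℕ → ℕ → ℕ → ℚ) :
    ∑ q ∈ S4 n, F q.1 q.2.1 q.2.2.1 q.2.2.2 = ∑ q ∈ S4 n, F q.2.1 q.1 q.2.2.2 q.2.2.1 := by
  apply Finset.sum_nbij' (fun q => (q.2.1, q.1, q.2.2.2, q.2.2.1))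
    (fun q => (q.2.1, q.1, q.2.2.2, q.2.2.1))
  · rintro ⟨a, b, x, y⟩ h
    rw [mem_S4] at h ⊢
    refine ⟨h.2.1, h.1, h.2.2.2.1, h.2.2.1, ?_⟩
    have := h.2.2.2.2; dsimp only at *; omega
  · rintro ⟨a, b, x, y⟩ h
    rw [mem_S4] at h ⊢
    refine ⟨h.2.1, h.1, h.2.2.2.1, h.2.2.1, ?_⟩
    have := h.2.2.2.2; dsimp only at *; omega
  · rintro ⟨a, b, x, y⟩ _; rfl
  · rintro ⟨a, b, x, y⟩ _; rfl
  · rintro ⟨a, b, x, y⟩ _; rfl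

/-- swap (a,b,x,y) ↦ (x,y,a,b). -/
lemma sum_sax (n : ℕ) (F : ℕ → ℕ → ℕ → ℕ → ℚ) :
    ∑ q ∈ S4 n, F q.1 q.2.1 q.2.2.1 q.2.2.2 = ∑ q ∈ S4 n, F q.2.2.1 q.2.2.2 q.1 q.2.1 := by
  apply Finset.sum_nbij' (fun q => (q.2.2.1, q.2.2.2, q.1, q.2.1))
    (fun q => (q.2.2.1, q.2.2.2, q.1, q.2.1))
  · rintro ⟨a, b, x, y⟩ h
    rw [mem_S4] at h ⊢
    refine ⟨h.2.2.1, h.2.2.2.1, h.1, h.2.1, ?_⟩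
    have := h.2.2.2.2; dsimp only at *
    rw [mul_comm x a, mul_comm y b]; omega
  · rintro ⟨a, b, x, y⟩ h
    rw [mem_S4] at h ⊢
    refine ⟨h.2.2.1, h.2.2.2.1, h.1, h.2.1, ?_⟩
    have := h.2.2.2.2; dsimp only at *
    rw [mul_comm x a, mul_comm y b]; omega
  · rintro ⟨a, b, x, y⟩ _; rfl
  · rintro ⟨a, b, x, y⟩ _; rfl
  · rintro ⟨a, b, x, y⟩ _; rfl


/-- Diagonal (a = b) sums reduce to divisor sums. -/
lemma diag (n : ℕ) (F : ℕ → ℕ → ℕ → ℕ → ℚ) :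
    ∑ q ∈ S4 n, (if q.1 = q.2.1 then F q.1 q.2.1 q.2.2.1 q.2.2.2 else 0)
      = ∑ p ∈ n.divisorsAntidiagonal, ∑ c ∈ Finset.Ico 1 p.1, F p.2 p.2 c (p.1 - c) := by
  have h := sum_sax n (fun a b x y => if a = b then F a b x y else 0)
  rw [h, ← Finset.sum_filter]
  exact bij3 n (fun a b x y => F x y a b)

/- characters and monomials -/
def w00 : ℕ → ℕ → ℚ := fun _ _ => 1
def w10 : ℕ → ℕ → ℚ := fun a _ => (-1 : ℚ) ^ a
def w01 : ℕ → ℕ → ℚ := fun _ b => (-1 : ℚ) ^ b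
def w11 : ℕ → ℕ → ℚ := fun a b => (-1 : ℚ) ^ (a + b)
def mXY : ℕ → ℕ → ℚ := fun x y => (x : ℚ) * (y : ℚ)
def mXX : ℕ → ℕ → ℚ := fun x y => (x : ℚ) ^ 2
def mYY : ℕ → ℕ → ℚ := fun x y => (y : ℚ) ^ 2

/-- region sum (b < a). -/
def PA (n : ℕ) (w m : ℕ → ℕ → ℚ) : ℚ :=
  ∑ q ∈ S4 n, if q.2.1 < q.1 then w q.1 q.2.1 * m q.2.2.1 q.2.2.2 else 0

/-- diagonal constant. -/
def DgD (n : ℕ) (w m : ℕ → ℕ → ℚ) : ℚ :=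
  ∑ p ∈ n.divisorsAntidiagonal, w p.2 p.2 * ∑ c ∈ Finset.Ico 1 p.1, m c (p.1 - c)

/-- boundary constant. -/
def BD (n : ℕ) (w : ℕ → ℕ → ℚ) : ℚ :=
  ∑ p ∈ n.divisorsAntidiagonal, (p.2 : ℚ) ^ 2 * ∑ c ∈ Finset.Ico 1 p.1, w c (p.1 - c)

/-- full sum with weight `w a b * m x y` splits into regions. -/
lemma full_split (n : ℕ) (w m wt : ℕ → ℕ → ℚ)
    (hwt : ∀ a b, w b a = wt a b) (hm : ∀ x y, m y x = m x y) :
    ∑ q ∈ S4 n, w q.1 q.2.1 * m q.2.2.1 q.2.2.2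
      = PA n w m + PA n wt m + DgD n w m := by
  have tri : ∀ q ∈ S4 n, w q.1 q.2.1 * m q.2.2.1 q.2.2.2
      = (if q.2.1 < q.1 then w q.1 q.2.1 * m q.2.2.1 q.2.2.2 else 0)
      + (if q.1 < q.2.1 then w q.1 q.2.1 * m q.2.2.1 q.2.2.2 else 0)
      + (if q.1 = q.2.1 then w q.1 q.2.1 * m q.2.2.1 q.2.2.2 else 0) := by
    intro q _
    rcases lt_trichotomy q.1 q.2.1 with h | h | h <;> split_ifs <;> first | omega | ring
  rw [Finset.sum_congr rfl tri, Finset.sum_add_distrib, Finset.sum_add_distrib]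
  congr 1
  · congr 1
    have t := sum_tau n (fun a b x y => if a < b then w a b * m x y else 0)
    rw [t]
    apply Finset.sum_congr rfl
    intro q _
    split_ifs with h
    · rw [hwt, hm]
    · rfl
  · rw [diag n (fun a b x y => w a b * m x y), DgD]
    apply Finset.sum_congr rfl
    intro p _
    rw [Finset.mul_sum]

/-- normalized engine instance for `w·x·y`. -/
lemma Lxy_gen (n : ℕ) (w w1 w2 wt : ℕ → ℕ → ℚ)
    (hw1 : ∀ a b : ℕ, b < a → w b (a - b) = w1 a b)
    (hw2 : ∀ a b : ℕ, b < a → w (a - b) b = w2 a b)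
    (hwt : ∀ a b, w b a = wt a b) :
    PA n w mXY + PA n wt mXY + DgD n w mXY
      = PA n w1 mXY + PA n w1 mXX + PA n w2 mXX + PA n w2 mXY + BD n w := by
  have E := engine n (fun a b x y => w a b * mXY x y)
  have h0 := full_split n w mXY wt hwt (by intro x y; simp [mXY]; ring)
  have h1 : (∑ q ∈ S4 n, if q.1 < q.2.1 then
      w q.1 (q.2.1 - q.1) * mXY (q.2.2.1 + q.2.2.2) q.2.2.2 else 0)
      = PA n w1 mXY + PA n w1 mXX := by
    have t := sum_tau n (fun a b x y => if a < b then w a (b - a) * mXY (x + y) y else 0)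
    rw [t, PA, PA, ← Finset.sum_add_distrib]
    apply Finset.sum_congr rfl
    intro q _
    split_ifs with h
    · rw [hw1 _ _ h]
      simp only [mXY, mXX]
      push_cast
      ring
    · ring
  have h2 : (∑ q ∈ S4 n, if q.2.1 < q.1 then
      w (q.1 - q.2.1) q.2.1 * mXY q.2.2.1 (q.2.2.1 + q.2.2.2) else 0)
      = PA n w2 mXX + PA n w2 mXY := by
    rw [PA, PA, ← Finset.sum_add_distrib]
    apply Finset.sum_congr rfl
    intro q _
    split_ifs with h
    · rw [hw2 _ _ h]
      simp only [mXY, mXX]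
      push_cast
      ring
    · ring
  have h3 : (∑ p ∈ n.divisorsAntidiagonal, ∑ c ∈ Finset.Ico 1 p.1,
      w c (p.1 - c) * mXY p.2 p.2) = BD n w := by
    rw [BD]
    apply Finset.sum_congr rfl
    intro p _
    rw [Finset.mul_sum]
    apply Finset.sum_congr rfl
    intro c _
    simp only [mXY]
    ring
  rw [h0, h1, h2, h3] at E
  linarith [E]

/-- normalized engine instance for `w·y²`. -/
lemma Ly2_gen (n : ℕ) (w w1 w2 wt : ℕ → ℕ → ℚ)
    (hw1 : ∀ a b : ℕ, b < a → w b (a - b) = w1 a b)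
    (hw2 : ∀ a b : ℕ, b < a → w (a - b) b = w2 a b)
    (hwt : ∀ a b, w b a = wt a b) :
    PA n w mYY + PA n wt mXX + DgD n w mYY
      = PA n w1 mXX + PA n w2 mXX + 2 * PA n w2 mXY + PA n w2 mYY + BD n w := by
  have E := engine n (fun a b x y => w a b * mYY x y)
  -- full split for mYY : tau sends y² ↦ x²
  have h0 : ∑ q ∈ S4 n, w q.1 q.2.1 * mYY q.2.2.1 q.2.2.2
      = PA n w mYY + PA n wt mXX + DgD n w mYY := by
    have tri : ∀ q ∈ S4 n, w q.1 q.2.1 * mYY q.2.2.1 q.2.2.2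
        = (if q.2.1 < q.1 then w q.1 q.2.1 * mYY q.2.2.1 q.2.2.2 else 0)
        + (if q.1 < q.2.1 then w q.1 q.2.1 * mYY q.2.2.1 q.2.2.2 else 0)
        + (if q.1 = q.2.1 then w q.1 q.2.1 * mYY q.2.2.1 q.2.2.2 else 0) := by
      intro q _
      rcases lt_trichotomy q.1 q.2.1 with h | h | h <;> split_ifs <;> first | omega | ring
    rw [Finset.sum_congr rfl tri, Finset.sum_add_distrib, Finset.sum_add_distrib]
    congr 1
    · congr 1
      have t := sum_tau n (fun a b x y => if a < b then w a b * mYY x y else 0)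
      rw [t]
      apply Finset.sum_congr rfl
      intro q _
      split_ifs with h
      · rw [hwt]; simp only [mYY, mXX]
      · rfl
    · rw [diag n (fun a b x y => w a b * mYY x y), DgD]
      apply Finset.sum_congr rfl
      intro p _
      rw [Finset.mul_sum]
  have h1 : (∑ q ∈ S4 n, if q.1 < q.2.1 then
      w q.1 (q.2.1 - q.1) * mYY (q.2.2.1 + q.2.2.2) q.2.2.2 else 0)
      = PA n w1 mXX := by
    have t := sum_tau n (fun a b x y => if a < b then w a (b - a) * mYY (x + y) y else 0)
    rw [t, PA]
    apply Finset.sum_congr rfl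
    intro q _
    split_ifs with h
    · rw [hw1 _ _ h]; simp only [mYY, mXX]
    · rfl
  have h2 : (∑ q ∈ S4 n, if q.2.1 < q.1 then
      w (q.1 - q.2.1) q.2.1 * mYY q.2.2.1 (q.2.2.1 + q.2.2.2) else 0)
      = PA n w2 mXX + 2 * PA n w2 mXY + PA n w2 mYY := by
    rw [PA, PA, PA, Finset.mul_sum, ← Finset.sum_add_distrib, ← Finset.sum_add_distrib]
    apply Finset.sum_congr rfl
    intro q _
    split_ifs with h
    · rw [hw2 _ _ h]
      simp only [mXY, mXX, mYY]
      push_cast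
      ring
    · ring
  have h3 : (∑ p ∈ n.divisorsAntidiagonal, ∑ c ∈ Finset.Ico 1 p.1,
      w c (p.1 - c) * mYY p.2 p.2) = BD n w := by
    rw [BD]
    apply Finset.sum_congr rfl
    intro p _
    rw [Finset.mul_sum]
    apply Finset.sum_congr rfl
    intro c _
    simp only [mYY]
    ring
  rw [h0, h1, h2, h3] at E
  linarith [E]

lemma conv_lemma (n : ℕ) (φ ψ : ℕ → ℕ → ℚ) :
    ∑ uv ∈ Finset.HasAntidiagonal.antidiagonal n,
      (∑ p ∈ uv.1.divisorsAntidiagonal, φ p.1 p.2) * (∑ p ∈ uv.2.divisorsAntidiagonal, ψ p.1 p.2)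
      = ∑ q ∈ S4 n, φ q.1 q.2.2.1 * ψ q.2.1 q.2.2.2 := by
  have step1 : ∀ uv ∈ Finset.HasAntidiagonal.antidiagonal n,
      (∑ p ∈ uv.1.divisorsAntidiagonal, φ p.1 p.2) * (∑ p ∈ uv.2.divisorsAntidiagonal, ψ p.1 p.2)
      = ∑ z ∈ uv.1.divisorsAntidiagonal ×ˢ uv.2.divisorsAntidiagonal,
          φ z.1.1 z.1.2 * ψ z.2.1 z.2.2 := by
    intro uv _
    rw [Finset.sum_mul_sum, Finset.sum_product]
  rw [Finset.sum_congr rfl step1, Finset.sum_sigma']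
  apply Finset.sum_nbij' (fun s => (s.2.1.1, s.2.2.1, s.2.1.2, s.2.2.2))
    (fun q => (⟨(q.1 * q.2.2.1, q.2.1 * q.2.2.2), ((q.1, q.2.2.1), (q.2.1, q.2.2.2))⟩ :
      Σ _ : ℕ × ℕ, (ℕ × ℕ) × (ℕ × ℕ)))
  · rintro ⟨⟨u, v⟩, ⟨⟨a, x⟩, ⟨b, y⟩⟩⟩ h
    simp only [Finset.mem_sigma, Finset.HasAntidiagonal.mem_antidiagonal, Finset.mem_product,
      Nat.mem_divisorsAntidiagonal] at h
    obtain ⟨huv, ⟨hax, hu⟩, ⟨hby, hv⟩⟩ := h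
    dsimp only
    rw [mem_S4]
    refine ⟨?_, ?_, ?_, ?_, by omega⟩ <;> 
      (apply Nat.pos_of_ne_zero; intro hz; subst hz; simp_all)
  · rintro ⟨a, b, x, y⟩ h
    rw [mem_S4] at h
    obtain ⟨ha, hb, hx, hy, he⟩ := h
    simp only [Finset.mem_sigma, Finset.HasAntidiagonal.mem_antidiagonal, Finset.mem_product,
      Nat.mem_divisorsAntidiagonal]
    exact ⟨he, ⟨trivial, by positivity⟩, ⟨trivial, by positivity⟩⟩
  · rintro ⟨⟨u, v⟩, ⟨⟨a, x⟩, ⟨b, y⟩⟩⟩ h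
    simp only [Finset.mem_sigma, Finset.HasAntidiagonal.mem_antidiagonal, Finset.mem_product,
      Nat.mem_divisorsAntidiagonal] at h
    simp only [Sigma.ext_iff, Prod.mk.injEq, heq_eq_eq]
    and_intros <;> first | trivial | omega
  · rintro ⟨a, b, x, y⟩ h
    rfl
  · rintro ⟨⟨u, v⟩, ⟨⟨a, x⟩, ⟨b, y⟩⟩⟩ h
    rfl


def sig1 (n : ℕ) : ℚ := ∑ p ∈ n.divisorsAntidiagonal, (p.1 : ℚ)
def sig3 (n : ℕ) : ℚ := ∑ p ∈ n.divisorsAntidiagonal, (p.1 : ℚ) ^ 3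

lemma w00h1 : ∀ a b : ℕ, b < a → w00 b (a - b) = w00 a b := fun _ _ _ => rfl
lemma w00h2 : ∀ a b : ℕ, b < a → w00 (a - b) b = w00 a b := fun _ _ _ => rfl
lemma w00ht : ∀ a b : ℕ, w00 b a = w00 a b := fun _ _ => rfl

lemma dA_fst_pos {n : ℕ} {p : ℕ × ℕ} (hp : p ∈ n.divisorsAntidiagonal) : 1 ≤ p.1 := by
  rw [Nat.mem_divisorsAntidiagonal] at hp
  rcases Nat.eq_zero_or_pos p.1 with h | h
  · exfalso; apply hp.2; rw [← hp.1, h, zero_mul]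
  · exact h

lemma eval_DgD00YY (n : ℕ) : DgD n w00 mYY
    = ∑ p ∈ n.divisorsAntidiagonal, (2 * (p.1:ℚ)^3 - 3 * (p.1:ℚ)^2 + (p.1:ℚ)) / 6 := by
  unfold DgD
  refine Finset.sum_congr rfl fun p hp => ?_
  rw [show w00 p.2 p.2 = 1 from rfl, one_mul]
  exact inner_yy

lemma eval_DgD00XY (n : ℕ) : DgD n w00 mXY
    = ∑ p ∈ n.divisorsAntidiagonal, ((p.1:ℚ)^3 - (p.1:ℚ)) / 6 := by
  unfold DgD
  refine Finset.sum_congr rfl fun p hp => ?_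
  rw [show w00 p.2 p.2 = 1 from rfl, one_mul]
  exact inner_xy

lemma eval_BD00 (n : ℕ) : BD n w00
    = ∑ p ∈ n.divisorsAntidiagonal, (p.2:ℚ)^2 * ((p.1:ℚ) - 1) := by
  unfold BD
  refine Finset.sum_congr rfl fun p hp => ?_
  rw [show (∑ c ∈ Finset.Ico 1 p.1, w00 c (p.1 - c)) = ∑ _c ∈ Finset.Ico 1 p.1, (1:ℚ) from rfl,
    inner_one (dA_fst_pos hp)]

lemma eval_nsig1 (n : ℕ) : (n : ℚ) * sig1 n
    = ∑ p ∈ n.divisorsAntidiagonal, (p.1:ℚ)^2 * (p.2:ℚ) := by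
  unfold sig1
  rw [Finset.mul_sum]
  refine Finset.sum_congr rfl fun p hp => ?_
  rw [Nat.mem_divisorsAntidiagonal] at hp
  have : ((p.1 * p.2 : ℕ) : ℚ) = (n : ℚ) := by rw [hp.1]
  push_cast at this
  rw [← this]
  ring

/-- Besge's identity. -/
theorem arithA (n : ℕ) :
    12 * ∑ uv ∈ Finset.HasAntidiagonal.antidiagonal n, sig1 uv.1 * sig1 uv.2
      = 5 * sig3 n + sig1 n - 6 * ((n : ℚ) * sig1 n) := by
  have h0 : ∑ uv ∈ Finset.HasAntidiagonal.antidiagonal n, sig1 uv.1 * sig1 uv.2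
      = ∑ q ∈ S4 n, (q.1 : ℚ) * (q.2.1 : ℚ) := by
    simpa [sig1] using conv_lemma n (fun a _ => (a : ℚ)) (fun a _ => (a : ℚ))
  have h1 : ∑ q ∈ S4 n, (q.1 : ℚ) * (q.2.1 : ℚ)
      = ∑ q ∈ S4 n, w00 q.1 q.2.1 * mXY q.2.2.1 q.2.2.2 := by
    have t := sum_sax n (fun a b _ _ => (a : ℚ) * (b : ℚ))
    rw [t]
    refine Finset.sum_congr rfl fun q _ => ?_
    simp [w00, mXY]
  have h2 := full_split n w00 mXY w00 w00ht (by intro x y; simp [mXY]; ring)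
  have I1 := Lxy_gen n w00 w00 w00 w00 w00h1 w00h2 w00ht
  have I2 := Ly2_gen n w00 w00 w00 w00 w00h1 w00h2 w00ht
  -- combined divisor-sum identity
  have hz : ∑ p ∈ n.divisorsAntidiagonal,
      (12 * ((2 * (p.1:ℚ)^3 - 3 * (p.1:ℚ)^2 + (p.1:ℚ)) / 6)
        + 6 * (((p.1:ℚ)^3 - (p.1:ℚ)) / 6)
        - 6 * ((p.2:ℚ)^2 * ((p.1:ℚ) - 1))
        - (5 * (p.1:ℚ)^3 + (p.1:ℚ) - 6 * ((p.1:ℚ)^2 * (p.2:ℚ)))) = 0 := by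
    refine antisym_dA n (fun d e =>
      12 * ((2 * (d:ℚ)^3 - 3 * (d:ℚ)^2 + (d:ℚ)) / 6)
        + 6 * (((d:ℚ)^3 - (d:ℚ)) / 6)
        - 6 * ((e:ℚ)^2 * ((d:ℚ) - 1))
        - (5 * (d:ℚ)^3 + (d:ℚ) - 6 * ((d:ℚ)^2 * (e:ℚ)))) fun d e _ => by ring
  have hsplit : (12 : ℚ) * DgD n w00 mYY + 6 * DgD n w00 mXY - 6 * BD n w00
      - (5 * sig3 n + sig1 n - 6 * ((n:ℚ) * sig1 n)) = 0 := by
    simp only [Finset.sum_sub_distrib, Finset.sum_add_distrib, ← Finset.mul_sum] at hz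
    rw [eval_DgD00YY, eval_DgD00XY, eval_BD00, eval_nsig1, sig3, sig1]
    linarith [hz]
  rw [h0, h1, h2]
  linarith [I1, I2, hsplit]

def sig1t (v : ℕ) : ℚ := if 2 ∣ v then sig1 (v / 2) else 0
def sig3t (v : ℕ) : ℚ := if 2 ∣ v then sig3 (v / 2) else 0

lemma evenize_dA (v : ℕ) (g : ℕ → ℚ) :
    ∑ p ∈ v.divisorsAntidiagonal, g p.1 * (if 2 ∣ p.2 then (1:ℚ) else 0)
      = if 2 ∣ v then ∑ p ∈ (v / 2).divisorsAntidiagonal, g p.1 else 0 := by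
  by_cases h2 : 2 ∣ v
  · rw [if_pos h2]
    have key : ∀ p ∈ v.divisorsAntidiagonal,
        g p.1 * (if 2 ∣ p.2 then (1:ℚ) else 0) = if 2 ∣ p.2 then g p.1 else 0 := by
      intro p _; split_ifs <;> simp
    rw [Finset.sum_congr rfl key, ← Finset.sum_filter]
    apply Finset.sum_nbij' (fun p => (p.1, p.2 / 2)) (fun p => (p.1, 2 * p.2))
    · rintro ⟨u, w⟩ hp
      simp only [Finset.mem_filter, Nat.mem_divisorsAntidiagonal] at hp ⊢
      obtain ⟨⟨he, hv⟩, hdvd⟩ := hp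
      obtain ⟨k, rfl⟩ := hdvd
      have hr : u * (2 * k) = 2 * (u * k) := by ring
      have hk2 : 2 * k / 2 = k := by omega
      rw [hk2]
      constructor
      · omega
      · omega
    · rintro ⟨u, w⟩ hr
      simp only [Finset.mem_filter, Nat.mem_divisorsAntidiagonal] at hr ⊢
      obtain ⟨he, hv⟩ := hr
      obtain ⟨m, rfl⟩ := h2
      have hr2 : u * (2 * w) = 2 * (u * w) := by ring
      refine ⟨⟨by omega, by omega⟩, by omega⟩
    · rintro ⟨u, w⟩ hp
      simp only [Finset.mem_filter, Nat.mem_divisorsAntidiagonal] at hp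
      obtain ⟨-, hdvd⟩ := hp
      simp only [Prod.mk.injEq]
      and_intros <;> first | trivial | omega
    · rintro ⟨u, w⟩ _
      simp only [Prod.mk.injEq]
      and_intros <;> first | trivial | omega
    · rintro ⟨u, w⟩ _
      rfl
  · rw [if_neg h2]
    apply Finset.sum_eq_zero
    intro p hp
    rw [Nat.mem_divisorsAntidiagonal] at hp
    have hnd : ¬ 2 ∣ p.2 := fun hdd => h2 (hp.1 ▸ Dvd.dvd.mul_left hdd p.1)
    simp [hnd]

lemma sig1t_dA (v : ℕ) :
    sig1t v = ∑ p ∈ v.divisorsAntidiagonal, (p.1 : ℚ) * (if 2 ∣ p.2 then (1:ℚ) else 0) := by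
  rw [evenize_dA v (fun d => (d : ℚ))]; rfl

lemma sig3t_dA (v : ℕ) :
    sig3t v = ∑ p ∈ v.divisorsAntidiagonal, (p.1 : ℚ) ^ 3 * (if 2 ∣ p.2 then (1:ℚ) else 0) := by
  rw [evenize_dA v (fun d => (d : ℚ) ^ 3)]; rfl

/- character hypotheses -/
lemma w10h1 : ∀ a b : ℕ, b < a → w10 b (a - b) = w01 a b := fun _ _ _ => rfl
lemma w10h2 : ∀ a b : ℕ, b < a → w10 (a - b) b = w11 a b := fun a b h => negpow_sub h.le
lemma w10ht : ∀ a b : ℕ, w10 b a = w01 a b := fun _ _ => rfl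
lemma w01h1 : ∀ a b : ℕ, b < a → w01 b (a - b) = w11 a b := fun a b h => negpow_sub h.le
lemma w01h2 : ∀ a b : ℕ, b < a → w01 (a - b) b = w01 a b := fun _ _ _ => rfl
lemma w01ht : ∀ a b : ℕ, w01 b a = w10 a b := fun _ _ => rfl
lemma w11h1 : ∀ a b : ℕ, b < a → w11 b (a - b) = w10 a b := by
  intro a b h
  show (-1 : ℚ) ^ (b + (a - b)) = (-1) ^ a
  congr 1
  omega
lemma w11h2 : ∀ a b : ℕ, b < a → w11 (a - b) b = w10 a b := by
  intro a b h
  show (-1 : ℚ) ^ ((a - b) + b) = (-1) ^ a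
  congr 1
  omega
lemma w11ht : ∀ a b : ℕ, w11 b a = w11 a b := by
  intro a b
  show (-1 : ℚ) ^ (b + a) = (-1) ^ (a + b)
  congr 1
  omega

/- evaluation lemmas for character constants -/
lemma eval_DgD10XY (n : ℕ) : DgD n w10 mXY
    = ∑ p ∈ n.divisorsAntidiagonal, (-1 : ℚ) ^ p.2 * (((p.1:ℚ)^3 - (p.1:ℚ)) / 6) := by
  unfold DgD
  refine Finset.sum_congr rfl fun p hp => ?_
  rw [show w10 p.2 p.2 = (-1 : ℚ) ^ p.2 from rfl]
  congr 1
  exact inner_xy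

lemma eval_DgD10YY (n : ℕ) : DgD n w10 mYY
    = ∑ p ∈ n.divisorsAntidiagonal,
        (-1 : ℚ) ^ p.2 * ((2 * (p.1:ℚ)^3 - 3 * (p.1:ℚ)^2 + (p.1:ℚ)) / 6) := by
  unfold DgD
  refine Finset.sum_congr rfl fun p hp => ?_
  rw [show w10 p.2 p.2 = (-1 : ℚ) ^ p.2 from rfl]
  congr 1
  exact inner_yy

lemma eval_DgD01XY (n : ℕ) : DgD n w01 mXY
    = ∑ p ∈ n.divisorsAntidiagonal, (-1 : ℚ) ^ p.2 * (((p.1:ℚ)^3 - (p.1:ℚ)) / 6) := by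
  unfold DgD
  refine Finset.sum_congr rfl fun p hp => ?_
  rw [show w01 p.2 p.2 = (-1 : ℚ) ^ p.2 from rfl]
  congr 1
  exact inner_xy

lemma eval_DgD01YY (n : ℕ) : DgD n w01 mYY
    = ∑ p ∈ n.divisorsAntidiagonal,
        (-1 : ℚ) ^ p.2 * ((2 * (p.1:ℚ)^3 - 3 * (p.1:ℚ)^2 + (p.1:ℚ)) / 6) := by
  unfold DgD
  refine Finset.sum_congr rfl fun p hp => ?_
  rw [show w01 p.2 p.2 = (-1 : ℚ) ^ p.2 from rfl]
  congr 1
  exact inner_yy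

lemma eval_DgD11YY (n : ℕ) : DgD n w11 mYY
    = ∑ p ∈ n.divisorsAntidiagonal, (2 * (p.1:ℚ)^3 - 3 * (p.1:ℚ)^2 + (p.1:ℚ)) / 6 := by
  unfold DgD
  refine Finset.sum_congr rfl fun p hp => ?_
  have h1 : w11 p.2 p.2 = 1 := by
    show (-1 : ℚ) ^ (p.2 + p.2) = 1
    exact Even.neg_one_pow ⟨p.2, rfl⟩
  rw [h1, one_mul]
  exact inner_yy

lemma eval_BD10 (n : ℕ) : BD n w10
    = ∑ p ∈ n.divisorsAntidiagonal, (p.2:ℚ)^2 * (if 2 ∣ p.1 then (-1:ℚ) else 0) := by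
  unfold BD
  refine Finset.sum_congr rfl fun p hp => ?_
  rw [show (∑ c ∈ Finset.Ico 1 p.1, w10 c (p.1 - c))
      = ∑ c ∈ Finset.Ico 1 p.1, (-1:ℚ)^c from rfl, inner_alt (dA_fst_pos hp)]

lemma eval_BD01 (n : ℕ) : BD n w01
    = ∑ p ∈ n.divisorsAntidiagonal, (p.2:ℚ)^2 * (if 2 ∣ p.1 then (-1:ℚ) else 0) := by
  unfold BD
  refine Finset.sum_congr rfl fun p hp => ?_
  rw [show (∑ c ∈ Finset.Ico 1 p.1, w01 c (p.1 - c))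
      = ∑ c ∈ Finset.Ico 1 p.1, (-1:ℚ)^(p.1 - c) from rfl, inner_alt' (dA_fst_pos hp)]

lemma eval_BD11 (n : ℕ) : BD n w11
    = ∑ p ∈ n.divisorsAntidiagonal, (p.2:ℚ)^2 * (((p.1:ℚ) - 1) * (-1:ℚ)^p.1) := by
  unfold BD
  refine Finset.sum_congr rfl fun p hp => ?_
  rw [show (∑ c ∈ Finset.Ico 1 p.1, w11 c (p.1 - c))
      = ∑ c ∈ Finset.Ico 1 p.1, (-1:ℚ)^(c + (p.1 - c)) from rfl, inner_altd (dA_fst_pos hp)]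

lemma eval_nsig1t (n : ℕ) : (n : ℚ) * sig1t n
    = ∑ p ∈ n.divisorsAntidiagonal,
        (p.1:ℚ)^2 * (p.2:ℚ) * (if 2 ∣ p.2 then (1:ℚ) else 0) := by
  rw [sig1t_dA, Finset.mul_sum]
  refine Finset.sum_congr rfl fun p hp => ?_
  rw [Nat.mem_divisorsAntidiagonal] at hp
  have hc : ((p.1 * p.2 : ℕ) : ℚ) = (n : ℚ) := by rw [hp.1]
  push_cast at hc
  rw [← hc]
  ring

/-- The level-2 convolution identity. -/
theorem arithC (n : ℕ) :
    24 * ∑ uv ∈ Finset.HasAntidiagonal.antidiagonal n, sig1 uv.1 * sig1t uv.2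
      = 2 * sig3 n + 8 * sig3t n + sig1 n - 3 * ((n:ℚ) * sig1 n)
        + sig1t n - 6 * ((n:ℚ) * sig1t n) := by
  have h0 : ∑ uv ∈ Finset.HasAntidiagonal.antidiagonal n, sig1 uv.1 * sig1t uv.2
      = ∑ q ∈ S4 n, (q.1 : ℚ) * ((q.2.1 : ℚ) * (if 2 ∣ q.2.2.2 then (1:ℚ) else 0)) := by
    have conv := conv_lemma n (fun a _ => (a : ℚ))
      (fun b y => (b : ℚ) * (if 2 ∣ y then (1:ℚ) else 0))
    rw [← conv]
    refine Finset.sum_congr rfl fun uv _ => ?_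
    rw [sig1, sig1t_dA]
  have hpt : ∀ q ∈ S4 n, (q.1 : ℚ) * ((q.2.1 : ℚ) * (if 2 ∣ q.2.2.2 then (1:ℚ) else 0))
      = (1/2) * ((q.1 : ℚ) * (q.2.1 : ℚ))
        + (1/2) * ((q.1 : ℚ) * (q.2.1 : ℚ) * (-1:ℚ)^q.2.2.2) := by
    intro q _
    rcases Nat.even_or_odd q.2.2.2 with h | h
    · have h1 : 2 ∣ q.2.2.2 := h.two_dvd
      rw [if_pos h1, h.neg_one_pow]
      ring
    · have h1 : ¬ 2 ∣ q.2.2.2 := by rcases h with ⟨k, hk⟩; omega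
      rw [if_neg h1, h.neg_one_pow]
      ring
  have h0' : ∑ q ∈ S4 n, (q.1 : ℚ) * ((q.2.1 : ℚ) * (if 2 ∣ q.2.2.2 then (1:ℚ) else 0))
      = (1/2) * (∑ q ∈ S4 n, (q.1 : ℚ) * (q.2.1 : ℚ))
        + (1/2) * (∑ q ∈ S4 n, (q.1 : ℚ) * (q.2.1 : ℚ) * (-1:ℚ)^q.2.2.2) := by
    rw [Finset.sum_congr rfl hpt, Finset.sum_add_distrib, ← Finset.mul_sum, ← Finset.mul_sum]
  -- part A : plain sum
  have hA : ∑ q ∈ S4 n, (q.1 : ℚ) * (q.2.1 : ℚ)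
      = PA n w00 mXY + PA n w00 mXY + DgD n w00 mXY := by
    have t := sum_sax n (fun a b _ _ => (a : ℚ) * (b : ℚ))
    rw [t]
    have : ∑ q ∈ S4 n, (q.2.2.1 : ℚ) * (q.2.2.2 : ℚ)
        = ∑ q ∈ S4 n, w00 q.1 q.2.1 * mXY q.2.2.1 q.2.2.2 := by
      refine Finset.sum_congr rfl fun q _ => ?_
      simp [w00, mXY]
    rw [this]
    exact full_split n w00 mXY w00 w00ht (by intro x y; simp [mXY]; ring)
  -- part B : (-1)^y weighted sum
  have hB : ∑ q ∈ S4 n, (q.1 : ℚ) * (q.2.1 : ℚ) * (-1:ℚ)^q.2.2.2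
      = PA n w01 mXY + PA n w10 mXY + DgD n w01 mXY := by
    have t := sum_sax n (fun a b _ y => (a : ℚ) * (b : ℚ) * (-1:ℚ)^y)
    rw [t]
    have : ∑ q ∈ S4 n, (q.2.2.1 : ℚ) * (q.2.2.2 : ℚ) * (-1:ℚ)^q.2.1
        = ∑ q ∈ S4 n, w01 q.1 q.2.1 * mXY q.2.2.1 q.2.2.2 := by
      refine Finset.sum_congr rfl fun q _ => ?_
      simp [w01, mXY]
      ring
    rw [this]
    exact full_split n w01 mXY w10 w01ht (by intro x y; simp [mXY]; ring)
  have I1 := Lxy_gen n w00 w00 w00 w00 w00h1 w00h2 w00ht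
  have I2 := Ly2_gen n w00 w00 w00 w00 w00h1 w00h2 w00ht
  have I3 := Lxy_gen n w10 w01 w11 w01 w10h1 w10h2 w10ht
  have I4 := Ly2_gen n w10 w01 w11 w01 w10h1 w10h2 w10ht
  have I5 := Ly2_gen n w01 w11 w01 w10 w01h1 w01h2 w01ht
  have I6 := Ly2_gen n w11 w10 w10 w11 w11h1 w11h2 w11ht
  -- combined divisor identity
  have hz : ∑ p ∈ n.divisorsAntidiagonal,
      (-6 * ((p.2:ℚ)^2 * ((p.1:ℚ) - 1))
        + 3 * ((p.2:ℚ)^2 * (if 2 ∣ p.1 then (-1:ℚ) else 0))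
        - 6 * ((p.2:ℚ)^2 * (if 2 ∣ p.1 then (-1:ℚ) else 0))
        - 3 * ((p.2:ℚ)^2 * (((p.1:ℚ) - 1) * (-1:ℚ)^p.1))
        + 6 * (((p.1:ℚ)^3 - (p.1:ℚ)) / 6)
        + 12 * ((2 * (p.1:ℚ)^3 - 3 * (p.1:ℚ)^2 + (p.1:ℚ)) / 6)
        - 6 * ((-1:ℚ)^p.2 * (((p.1:ℚ)^3 - (p.1:ℚ)) / 6))
        + 3 * ((-1:ℚ)^p.2 * ((2 * (p.1:ℚ)^3 - 3 * (p.1:ℚ)^2 + (p.1:ℚ)) / 6))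
        + 3 * ((2 * (p.1:ℚ)^3 - 3 * (p.1:ℚ)^2 + (p.1:ℚ)) / 6)
        + 12 * ((-1:ℚ)^p.2 * (((p.1:ℚ)^3 - (p.1:ℚ)) / 6))
        + 6 * ((-1:ℚ)^p.2 * ((2 * (p.1:ℚ)^3 - 3 * (p.1:ℚ)^2 + (p.1:ℚ)) / 6))
        - (2 * (p.1:ℚ)^3
          + 8 * ((p.1:ℚ)^3 * (if 2 ∣ p.2 then (1:ℚ) else 0))
          + (p.1:ℚ)
          - 3 * ((p.1:ℚ)^2 * (p.2:ℚ))
          + (p.1:ℚ) * (if 2 ∣ p.2 then (1:ℚ) else 0)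
          - 6 * ((p.1:ℚ)^2 * (p.2:ℚ) * (if 2 ∣ p.2 then (1:ℚ) else 0)))) = 0 := by
    refine antisym_dA n (fun d e =>
      -6 * ((e:ℚ)^2 * ((d:ℚ) - 1))
        + 3 * ((e:ℚ)^2 * (if 2 ∣ d then (-1:ℚ) else 0))
        - 6 * ((e:ℚ)^2 * (if 2 ∣ d then (-1:ℚ) else 0))
        - 3 * ((e:ℚ)^2 * (((d:ℚ) - 1) * (-1:ℚ)^d))
        + 6 * (((d:ℚ)^3 - (d:ℚ)) / 6)
        + 12 * ((2 * (d:ℚ)^3 - 3 * (d:ℚ)^2 + (d:ℚ)) / 6)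
        - 6 * ((-1:ℚ)^e * (((d:ℚ)^3 - (d:ℚ)) / 6))
        + 3 * ((-1:ℚ)^e * ((2 * (d:ℚ)^3 - 3 * (d:ℚ)^2 + (d:ℚ)) / 6))
        + 3 * ((2 * (d:ℚ)^3 - 3 * (d:ℚ)^2 + (d:ℚ)) / 6)
        + 12 * ((-1:ℚ)^e * (((d:ℚ)^3 - (d:ℚ)) / 6))
        + 6 * ((-1:ℚ)^e * ((2 * (d:ℚ)^3 - 3 * (d:ℚ)^2 + (d:ℚ)) / 6))
        - (2 * (d:ℚ)^3
          + 8 * ((d:ℚ)^3 * (if 2 ∣ e then (1:ℚ) else 0))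
          + (d:ℚ)
          - 3 * ((d:ℚ)^2 * (e:ℚ))
          + (d:ℚ) * (if 2 ∣ e then (1:ℚ) else 0)
          - 6 * ((d:ℚ)^2 * (e:ℚ) * (if 2 ∣ e then (1:ℚ) else 0)))) ?_
    intro d e _
    have hcase : ∀ m : ℕ, (2 ∣ m ∧ (-1:ℚ)^m = 1) ∨ (¬ 2 ∣ m ∧ (-1:ℚ)^m = -1) := by
      intro m
      rcases Nat.even_or_odd m with h | h
      · exact Or.inl ⟨h.two_dvd, h.neg_one_pow⟩
      · exact Or.inr ⟨by rcases h with ⟨k, hk⟩; omega, h.neg_one_pow⟩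
    rcases hcase d with ⟨hd1, hd2⟩ | ⟨hd1, hd2⟩ <;> rcases hcase e with ⟨he1, he2⟩ | ⟨he1, he2⟩ <;>
      simp only [hd1, hd2, he1, he2, if_pos, if_neg, if_true, if_false] <;> ring
  simp only [Finset.sum_add_distrib, Finset.sum_sub_distrib, ← Finset.mul_sum] at hz
  rw [h0, h0', hA, hB]
  have hs3 : sig3 n = ∑ p ∈ n.divisorsAntidiagonal, (p.1:ℚ)^3 := rfl
  have hs1 : sig1 n = ∑ p ∈ n.divisorsAntidiagonal, (p.1:ℚ) := rfl
  linarith [I1, I2, I3, I4, I5, I6, hz, eval_BD00 n, eval_BD10 n, eval_BD01 n, eval_BD11 n,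
    eval_DgD00XY n, eval_DgD00YY n, eval_DgD10XY n, eval_DgD10YY n, eval_DgD11YY n,
    eval_DgD01XY n, eval_DgD01YY n, eval_nsig1 n, eval_nsig1t n, hs3, hs1,
    sig3t_dA n, sig1t_dA n]


/- ### Power series layer -/

def L1 : ℚ⟦X⟧ := PowerSeries.mk fun n => sig1 n
def L1s : ℚ⟦X⟧ := PowerSeries.mk fun n => sig1t n
def L3 : ℚ⟦X⟧ := PowerSeries.mk fun n => sig3 n
def L3s : ℚ⟦X⟧ := PowerSeries.mk fun n => sig3t n
def N1 : ℚ⟦X⟧ := PowerSeries.mk fun n => (n : ℚ) * sig1 n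
def N1s : ℚ⟦X⟧ := PowerSeries.mk fun n => (n : ℚ) * sig1t n

lemma sig1_eq (n : ℕ) : sig1 n = ∑ d ∈ n.divisors, (d : ℚ) :=
  Nat.sum_divisorsAntidiagonal (fun d _ => (d : ℚ))

lemma sig3_eq (n : ℕ) : sig3 n = ∑ d ∈ n.divisors, (d : ℚ) ^ 3 :=
  Nat.sum_divisorsAntidiagonal (fun d _ => (d : ℚ) ^ 3)

lemma sig1_zero : sig1 0 = 0 := by simp [sig1]
lemma sig1t_zero : sig1t 0 = 0 := by simp [sig1t, sig1]
lemma sig3_zero : sig3 0 = 0 := by simp [sig3]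
lemma sig3t_zero : sig3t 0 = 0 := by simp [sig3t, sig3]

lemma c_ofNat (a : ℕ) [a.AtLeastTwo] :
    (OfNat.ofNat a : ℚ⟦X⟧) = C (OfNat.ofNat a) := (map_ofNat (C (R := ℚ)) a).symm

lemma conv_evenize (n : ℕ) :
    ∑ uv ∈ Finset.HasAntidiagonal.antidiagonal n, sig1t uv.1 * sig1t uv.2
      = if 2 ∣ n then ∑ uv ∈ Finset.HasAntidiagonal.antidiagonal (n / 2), sig1 uv.1 * sig1 uv.2 else 0 := by
  by_cases h2 : 2 ∣ n
  · rw [if_pos h2]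
    rw [← Finset.sum_filter_of_ne
      (p := fun uv : ℕ × ℕ => 2 ∣ uv.1 ∧ 2 ∣ uv.2) (by
        intro uv hmem hne
        constructor
        · by_contra hodd
          apply hne
          rw [show sig1t uv.1 = 0 from by rw [sig1t, if_neg hodd], zero_mul]
        · by_contra hodd
          apply hne
          rw [show sig1t uv.2 = 0 from by rw [sig1t, if_neg hodd], mul_zero])]
    apply Finset.sum_nbij' (fun uv => (uv.1 / 2, uv.2 / 2)) (fun st => (2 * st.1, 2 * st.2))
    · rintro ⟨u, v⟩ h
      simp only [Finset.mem_filter, Finset.HasAntidiagonal.mem_antidiagonal] at h ⊢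
      omega
    · rintro ⟨s, t⟩ h
      simp only [Finset.mem_filter, Finset.HasAntidiagonal.mem_antidiagonal] at h ⊢
      omega
    · rintro ⟨u, v⟩ h
      simp only [Finset.mem_filter, Finset.HasAntidiagonal.mem_antidiagonal] at h
      simp only [Prod.mk.injEq]
      omega
    · rintro ⟨s, t⟩ h
      simp only [Finset.HasAntidiagonal.mem_antidiagonal] at h
      simp only [Prod.mk.injEq]
      omega
    · rintro ⟨u, v⟩ h
      simp only [Finset.mem_filter, Finset.HasAntidiagonal.mem_antidiagonal] at h
      rw [sig1t, if_pos h.2.1, sig1t, if_pos h.2.2]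
  · rw [if_neg h2]
    apply Finset.sum_eq_zero
    intro uv huv
    rw [Finset.HasAntidiagonal.mem_antidiagonal] at huv
    by_cases hu : 2 ∣ uv.1
    · rw [show sig1t uv.2 = 0 from by rw [sig1t, if_neg (by omega)], mul_zero]
    · rw [show sig1t uv.1 = 0 from by rw [sig1t, if_neg hu], zero_mul]

lemma arithA2 (n : ℕ) :
    12 * ∑ uv ∈ Finset.HasAntidiagonal.antidiagonal n, sig1t uv.1 * sig1t uv.2
      = 5 * sig3t n + sig1t n - 3 * ((n : ℚ) * sig1t n) := by
  rw [conv_evenize]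
  by_cases h2 : 2 ∣ n
  · rw [if_pos h2]
    have hA := arithA (n / 2)
    obtain ⟨m, rfl⟩ := h2
    have hm : 2 * m / 2 = m := by omega
    rw [hm] at hA
    rw [sig3t, if_pos (dvd_mul_right 2 m), sig1t, if_pos (dvd_mul_right 2 m), hm]
    push_cast at hA ⊢
    linarith [hA]
  · rw [if_neg h2, sig3t, sig1t, if_neg h2, if_neg h2]
    ring

lemma hE2 : E2 = 1 - 24 * L1 := by
  ext m
  rw [show E2 = PowerSeries.mk fun n => if n = 0 then 1
    else -24 * ∑ d ∈ n.divisors, (d : ℚ) from rfl]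
  simp only [map_sub, c_ofNat, coeff_C_mul, PowerSeries.coeff_one, L1, PowerSeries.coeff_mk]
  by_cases h : m = 0
  · subst h; simp [sig1_zero]
  · rw [if_neg h, if_neg h, sig1_eq]; ring

lemma hE4 : E4 = 1 + 240 * L3 := by
  ext m
  rw [show E4 = PowerSeries.mk fun n => if n = 0 then 1
    else 240 * ∑ d ∈ n.divisors, (d : ℚ) ^ 3 from rfl]
  simp only [map_add, c_ofNat, coeff_C_mul, PowerSeries.coeff_one, L3, PowerSeries.coeff_mk]
  by_cases h : m = 0
  · subst h; simp [sig3_zero]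
  · rw [if_neg h, if_neg h, sig3_eq]; ring

lemma coeff_E2 (m : ℕ) : coeff m E2 = (if m = 0 then 1 else 0) - 24 * sig1 m := by
  rw [hE2]
  simp only [map_sub, c_ofNat, coeff_C_mul, PowerSeries.coeff_one, L1, PowerSeries.coeff_mk]

lemma hG2 : G2 = 1 + 24 * L1 - 48 * L1s := by
  ext m
  rw [show G2 = 2 * E2sq - E2 from rfl]
  rw [show E2sq = PowerSeries.mk fun n => if 2 ∣ n then coeff (n / 2) E2 else 0 from rfl]
  simp only [map_sub, map_add, c_ofNat, coeff_C_mul, PowerSeries.coeff_one,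
    L1, L1s, PowerSeries.coeff_mk, coeff_E2]
  by_cases h : m = 0
  · subst h
    norm_num [sig1_zero, sig1t_zero]
  · rw [if_neg h]
    by_cases h2 : 2 ∣ m
    · rw [if_pos h2]
      have hm2 : ¬ (m / 2 = 0) := by omega
      rw [if_neg hm2, sig1t, if_pos h2]
      ring
    · rw [if_neg h2, sig1t, if_neg h2]
      ring

lemma hDqG2 : Dq G2 = 24 * N1 - 48 * N1s := by
  ext m
  rw [show Dq G2 = PowerSeries.mk fun n => (n : ℚ) * coeff n G2 from rfl]
  rw [PowerSeries.coeff_mk, hG2]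
  simp only [map_sub, map_add, c_ofNat, coeff_C_mul, PowerSeries.coeff_one,
    L1, L1s, N1, N1s, PowerSeries.coeff_mk]
  by_cases h : m = 0
  · subst h; simp [sig1_zero, sig1t_zero]
  · rw [if_neg h]; ring

lemma KeyA : 12 * (L1 * L1) = 5 * L3 + L1 - 6 * N1 := by
  ext m
  simp only [map_sub, map_add, c_ofNat, coeff_C_mul]
  simp only [PowerSeries.coeff_mul, L1, L3, N1, PowerSeries.coeff_mk]
  exact arithA m

lemma KeyA2 : 12 * (L1s * L1s) = 5 * L3s + L1s - 3 * N1s := by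
  ext m
  simp only [map_sub, map_add, c_ofNat, coeff_C_mul]
  simp only [PowerSeries.coeff_mul, L1s, L3s, N1s, PowerSeries.coeff_mk]
  exact arithA2 m

lemma KeyC : 24 * (L1 * L1s) = 2 * L3 + 8 * L3s + L1 - 3 * N1 + L1s - 6 * N1s := by
  ext m
  simp only [map_sub, map_add, c_ofNat, coeff_C_mul]
  simp only [PowerSeries.coeff_mul, L1, L1s, L3, L3s, N1, N1s, PowerSeries.coeff_mk]
  exact arithC m

theorem main6 : 6 * Dq G2 = E2 * G2 - 2 * G2 ^ 2 + E4 := by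
  rw [hDqG2, hE2, hE4, hG2, pow_two]
  linear_combination (144 : ℚ⟦X⟧) * KeyA + 384 * KeyA2 - 240 * KeyC

end DG2aux

/-- `D(G₂) = (E₂G₂ - 2G₂² + E₄)/6`. -/
theorem D_G2 : Dq G2 = (1 / 6 : ℚ) • (E2 * G2 - 2 * G2 ^ 2 + E4) := by
  rw [show E2 * G2 - 2 * G2 ^ 2 + E4 = 6 * Dq G2 from DG2aux.main6.symm]
  rw [PowerSeries.smul_eq_C_mul, DG2aux.c_ofNat 6, ← mul_assoc, ← map_mul]
  norm_num
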